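/- Let c be a real number with c > 27/4 and let β = S(c). Then 0 < β - 1 < 27/(8c); in particular 1 < β < 3/2. -/

import Mathlib

open Finset PowerSeries



/-- Fuss–Catalan numbers as reals. -/
noncomputable def fcA (n : ℕ) : ℝ := (Nat.choose (3*n) n : ℝ) / (2*n+1)

lemma fcA_nonneg (n : ℕ) : 0 ≤ fcA n := by
  unfold fcA; positivity

lemma fcA_zero : fcA 0 = 1 := by norm_num [fcA]
lemma fcA_one : fcA 1 = 1 := by
  have : Nat.choose 3 1 = 3 := by decide
  norm_num [fcA, this]
lemma fcA_two : fcA 2 = 3 := by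
  have : Nat.choose 6 2 = 15 := by decide
  norm_num [fcA, this]

lemma fcA_rec (n : ℕ) :
    2*((n:ℝ)+1)*(2*n+3) * fcA (n+1) = 3*(3*n+1)*(3*n+2) * fcA n := by
  have c1 := Nat.choose_mul_factorial_mul_factorial (show n ≤ 3*n by omega)
  have c2 := Nat.choose_mul_factorial_mul_factorial (show n+1 ≤ 3*(n+1) by omega)
  have e1 : 3*n - n = 2*n := by omega
  have e2 : 3*(n+1) - (n+1) = 2*n+2 := by omega
  rw [e1] at c1; rw [e2] at c2
  have f3 : Nat.factorial (3*(n+1)) = (3*n+3)*((3*n+2)*((3*n+1)*Nat.factorial (3*n))) := by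
    rw [show 3*(n+1) = (3*n+2)+1 by ring, Nat.factorial_succ,
        show 3*n+2 = (3*n+1)+1 by ring, Nat.factorial_succ,
        show 3*n+1 = (3*n)+1 by ring, Nat.factorial_succ]
  have f1 : Nat.factorial (n+1) = (n+1)*Nat.factorial n := Nat.factorial_succ n
  have f2 : Nat.factorial (2*n+2) = (2*n+2)*((2*n+1)*Nat.factorial (2*n)) := by
    rw [show 2*n+2 = (2*n+1)+1 by ring, Nat.factorial_succ,
        show 2*n+1 = (2*n)+1 by ring, Nat.factorial_succ]
  rw [f3, f1, f2] at c2
  have C1 : ((Nat.choose (3*n) n : ℝ)) * (Nat.factorial n : ℝ) * (Nat.factorial (2*n) : ℝ)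
      = (Nat.factorial (3*n) : ℝ) := by exact_mod_cast congrArg (Nat.cast : ℕ → ℝ) c1
  have C2 : ((Nat.choose (3*(n+1)) (n+1) : ℝ)) * (((n:ℝ)+1)*(Nat.factorial n : ℝ)) *
      ((2*(n:ℝ)+2)*((2*(n:ℝ)+1)*(Nat.factorial (2*n) : ℝ)))
      = (3*(n:ℝ)+3)*((3*(n:ℝ)+2)*((3*(n:ℝ)+1)*(Nat.factorial (3*n) : ℝ))) := by
    exact_mod_cast congrArg (Nat.cast : ℕ → ℝ) c2
  have hn : (0:ℝ) < (Nat.factorial n : ℝ) := by exact_mod_cast Nat.factorial_pos _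
  have h2n : (0:ℝ) < (Nat.factorial (2*n) : ℝ) := by exact_mod_cast Nat.factorial_pos _
  set A := (Nat.choose (3*(n+1)) (n+1) : ℝ) with hA
  set B := (Nat.choose (3*n) n : ℝ) with hB
  have key : A * (((n:ℝ)+1)*(2*n+2)*(2*n+1)) = (3*n+3)*((3*n+2)*((3*n+1)*B)) := by
    have hF : (Nat.factorial n : ℝ) * (Nat.factorial (2*n) : ℝ) ≠ 0 := by positivity
    apply mul_right_cancel₀ hF
    linear_combination C2 - (3*(n:ℝ)+3)*(3*(n:ℝ)+2)*(3*(n:ℝ)+1) * C1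
  have hP : ((n:ℝ)+1) * (2*((n:ℝ)+1)*(2*(n:ℝ)+3) * fcA (n+1))
      = ((n:ℝ)+1) * (3*(3*(n:ℝ)+1)*(3*(n:ℝ)+2) * fcA n) := by
    unfold fcA
    rw [← hB]
    have : (Nat.choose (3*(n+1)) (n+1) : ℝ) = A := by rw [hA]
    push_cast
    push_cast at this
    rw [this]
    have d1 : (2*((n:ℝ)+1)+1) ≠ 0 := by positivity
    have d2 : (2*(n:ℝ)+1) ≠ 0 := by positivity
    field_simp
    have hn1 : ((n:ℝ)+1) ≠ 0 := by positivity
    apply mul_left_cancel₀ hn1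
    linear_combination (2*(n:ℝ)+3) * key
  exact mul_left_cancel₀ (by positivity) hP


/-- triple convolution at index n -/
noncomputable def fcP3 (f : ℕ → ℝ) (n : ℕ) : ℝ :=
  ∑ p ∈ Finset.HasAntidiagonal.antidiagonal n, (∑ q ∈ Finset.HasAntidiagonal.antidiagonal p.1, f q.1 * f q.2) * f p.2

noncomputable def fcPhi (f : ℕ → ℝ) : ℕ → ℝ := fun n =>
  match n with
  | 0 => 1
  | n+1 => fcP3 f n

noncomputable def fcB : ℕ → ℝ := fun n => (fcPhi^[n+1] (fun _ => 0)) n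

lemma fcP3_congr {f g : ℕ → ℝ} {n : ℕ} (h : ∀ m ≤ n, f m = g m) :
    fcP3 f n = fcP3 g n := by
  unfold fcP3
  apply Finset.sum_congr rfl
  intro p hp
  rw [Finset.HasAntidiagonal.mem_antidiagonal] at hp
  have hp2 : p.2 ≤ n := by omega
  have hp1 : p.1 ≤ n := by omega
  rw [h p.2 hp2]
  congr 1
  apply Finset.sum_congr rfl
  intro q hq
  rw [Finset.HasAntidiagonal.mem_antidiagonal] at hq
  rw [h q.1 (by omega), h q.2 (by omega)]

lemma fcPhi_congr {f g : ℕ → ℝ} {n : ℕ} (h : ∀ m < n, f m = g m) :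
    fcPhi f n = fcPhi g n := by
  cases n with
  | zero => rfl
  | succ n => exact fcP3_congr fun m hm => h m (by omega)

lemma fcPhi_stable : ∀ k, ∀ n < k, (fcPhi^[k] (fun _ => 0)) n = fcB n := by
  intro k
  induction k using Nat.strong_induction_on with
  | _ k ih =>
    intro n hn
    match k, hn with
    | k+1, hn =>
      rw [Function.iterate_succ_apply']
      unfold fcB
      rw [Function.iterate_succ_apply']
      exact fcPhi_congr fun m hm => by
        rw [ih k (by omega) m (by omega), ← ih n (by omega) m (by omega)]

lemma fcB_zero : fcB 0 = 1 := rfl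

lemma fcB_succ (n : ℕ) : fcB (n+1) = fcP3 fcB n := by
  have : fcB (n+1) = fcPhi ((fcPhi^[n+1]) (fun _ => 0)) (n+1) := by
    unfold fcB; rw [Function.iterate_succ_apply']
  rw [this]
  show fcP3 _ n = _
  exact fcP3_congr fun m hm => fcPhi_stable (n+1) m (by omega)


variable (B : ℕ → ℝ)

noncomputable def uB : ℝ⟦X⟧ := PowerSeries.mk B

lemma coeff_uB_cube (n : ℕ) :
    (PowerSeries.coeff n) ((uB B)^3) = fcP3 B n := by
  rw [pow_succ, pow_two]
  rw [PowerSeries.coeff_mul]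
  unfold fcP3
  apply Finset.sum_congr rfl
  intro p hp
  rw [PowerSeries.coeff_mul]
  simp [uB]

lemma uB_eq (hB0 : B 0 = 1) (hBsucc : ∀ n, B (n+1) = fcP3 B n) :
    uB B = 1 + PowerSeries.X * (uB B)^3 := by
  ext n
  cases n with
  | zero =>
    simp [uB, hB0]
  | succ n =>
    rw [map_add, PowerSeries.coeff_succ_X_mul, coeff_uB_cube]
    simp [uB, hBsucc n, PowerSeries.coeff_one]
section deriv

variable {u : ℝ⟦X⟧} (hu : u = 1 + PowerSeries.X * u^3)

noncomputable abbrev Dx : ℝ⟦X⟧ → ℝ⟦X⟧ := fun f => PowerSeries.derivative ℝ f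

lemma hR1 (hu : u = 1 + PowerSeries.X * u^3) :
    Dx u = u^3 + 3 * PowerSeries.X * u^2 * Dx u := by
  conv_lhs => rw [hu]
  rw [show (1 + PowerSeries.X * u^3 : ℝ⟦X⟧) = PowerSeries.X * u^3 + 1 by ring]
  unfold Dx
  rw [map_add, Derivation.map_one_eq_zero, Derivation.leibniz, Derivation.leibniz_pow, PowerSeries.derivative_X]
  simp [smul_eq_mul, nsmul_eq_mul]
  ring
end deriv

section deriv2
variable {u : ℝ⟦X⟧}

lemma hD3 : Dx (3:ℝ⟦X⟧) = 0 := by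
  rw [← map_ofNat (PowerSeries.C (R := ℝ)) 3]
  exact PowerSeries.derivative_C

lemma hR2 (hu : u = 1 + PowerSeries.X * u^3) :
    Dx (Dx u) = 6*u^2*(Dx u) + 6*PowerSeries.X*u*(Dx u)^2
      + 3*PowerSeries.X*u^2*(Dx (Dx u)) := by
  have h := congrArg Dx (hR1 hu)
  rw [show (u^3 + 3 * PowerSeries.X * u^2 * Dx u : ℝ⟦X⟧)
      = u^3 + (3:ℝ⟦X⟧) * (PowerSeries.X * (u^2 * Dx u)) by ring] at h
  unfold Dx at h ⊢
  rw [map_add] at h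
  simp only [Derivation.leibniz, Derivation.leibniz_pow, PowerSeries.derivative_X,
    smul_eq_mul, nsmul_eq_mul] at h
  rw [show ((d⁄dX ℝ) 3 : ℝ⟦X⟧) = 0 from hD3] at h
  push_cast at h
  linear_combination h
end deriv2

section main
variable {u : ℝ⟦X⟧}
open PowerSeries

lemma hEzero (hu : u = 1 + PowerSeries.X * u^3) :
    (PowerSeries.X*(4 - 27*PowerSeries.X))*(Dx (Dx u)) + (6 - 54*PowerSeries.X)*(Dx u) - 6*u
      = 0 := by
  set X' : ℝ⟦X⟧ := PowerSeries.X with hX'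
  set d1 := Dx u with hd1
  set d2 := Dx (Dx u) with hd2
  set W : ℝ⟦X⟧ := 1 - 3*X'*u^2 with hW
  have h0 : X'*u^3 - u + 1 = 0 := by linear_combination (-1 : ℝ⟦X⟧) * hu
  have h1 : d1 * W = u^3 := by
    have h := hR1 hu
    rw [← hd1, ← hX'] at h
    linear_combination h
  have h2 : d2 * W = 6*u^2*d1 + 6*X'*u*d1^2 := by
    have h := hR2 hu
    rw [← hd1, ← hd2, ← hX'] at h
    linear_combination h
  have key : ((X'*(4 - 27*X'))*d2 + (6 - 54*X')*d1 - 6*u) * W^3 = 0 := by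
    linear_combination (6*X'*u^4 - 6*u^2 - 6*u) * h0
      + (6 - 54*X' - 12*u^2*X' + 162*u^2*X'^2 + 6*u^4*X'^2 - 162*u^4*X'^3
         + d1*(24*u*X'^2 - 162*u*X'^3 - 72*u^3*X'^3 + 486*u^3*X'^4)) * h1
      + (X'*(4 - 27*X')*W^2) * h2
  have hWne : W ≠ 0 := by
    intro h
    have : (PowerSeries.constantCoeff (R := ℝ)) W = 1 := by
      rw [hW, hX']
      simp
    rw [h, map_zero] at this
    norm_num at this
  rcases mul_eq_zero.mp key with h | h
  · exact h
  · exact absurd (pow_eq_zero_iff (by norm_num)|>.mp h) hWne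
end main

section extract
open PowerSeries

lemma fcB_rec_aux (B : ℕ → ℝ) (hu : PowerSeries.mk B = 1 + PowerSeries.X * (PowerSeries.mk B)^3)
    (n : ℕ) :
    2*((n:ℝ)+1)*(2*n+3) * B (n+1) = 3*(3*n+1)*(3*n+2) * B n := by
  set u : ℝ⟦X⟧ := PowerSeries.mk B with hu'
  have hE := hEzero hu
  have hE2 : (PowerSeries.C 4)*(PowerSeries.X*(Dx (Dx u)))
      - (PowerSeries.C 27)*(PowerSeries.X*(PowerSeries.X*(Dx (Dx u))))
      + (PowerSeries.C 6)*(Dx u) - (PowerSeries.C 54)*(PowerSeries.X*(Dx u))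
      - (PowerSeries.C 6)*u = 0 := by
    rw [show (PowerSeries.C (4:ℝ)) = (4:ℝ⟦X⟧) from map_ofNat _ _,
        show (PowerSeries.C (27:ℝ)) = (27:ℝ⟦X⟧) from map_ofNat _ _,
        show (PowerSeries.C (6:ℝ)) = (6:ℝ⟦X⟧) from map_ofNat _ _,
        show (PowerSeries.C (54:ℝ)) = (54:ℝ⟦X⟧) from map_ofNat _ _]
    linear_combination hE
  have hc : ∀ m : ℕ, (PowerSeries.coeff m) (Dx u) = B (m+1) * (m+1) := by
    intro m
    unfold Dx
    rw [PowerSeries.coeff_derivative, hu', PowerSeries.coeff_mk]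
  have hc2 : ∀ m : ℕ, (PowerSeries.coeff m) (Dx (Dx u)) = B (m+2) * (m+2) * (m+1) := by
    intro m
    have h2 := hc (m+1)
    unfold Dx at h2 ⊢
    rw [PowerSeries.coeff_derivative, h2]
    push_cast
    ring
  match n with
  | 0 =>
    have h := congrArg (PowerSeries.coeff 0) hE2
    simp only [map_add, map_sub, PowerSeries.coeff_C_mul,
      PowerSeries.coeff_zero_X_mul, map_zero] at h
    rw [hc 0] at h
    rw [hu', PowerSeries.coeff_mk] at h
    push_cast at h ⊢
    norm_num at h ⊢
    linarith
  | 1 =>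
    have h := congrArg (PowerSeries.coeff 1) hE2
    rw [show (1:ℕ) = 0+1 from rfl] at h
    simp only [map_add, map_sub, PowerSeries.coeff_C_mul,
      PowerSeries.coeff_succ_X_mul, PowerSeries.coeff_zero_X_mul, map_zero] at h
    rw [hc2 0, hc 1, hc 0] at h
    rw [hu', PowerSeries.coeff_mk] at h
    push_cast at h ⊢
    norm_num at h ⊢
    linarith
  | (m+2) =>
    have h := congrArg (PowerSeries.coeff (m+2)) hE2
    simp only [map_add, map_sub, PowerSeries.coeff_C_mul,
      PowerSeries.coeff_succ_X_mul, PowerSeries.coeff_zero_X_mul, map_zero,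
      show m+2 = (m+1)+1 from rfl] at h
    rw [hc2 (m+1), hc2 m, hc (m+2), hc (m+1)] at h
    rw [hu', PowerSeries.coeff_mk] at h
    push_cast at h ⊢
    ring_nf at h ⊢
    linarith
end extract

lemma fcB_eq_fcA : ∀ n, fcB n = fcA n := by
  have hu := uB_eq fcB fcB_zero fcB_succ
  unfold uB at hu
  have hrec := fcB_rec_aux fcB hu
  intro n
  induction n with
  | zero => rw [fcB_zero, fcA_zero]
  | succ n ih =>
    have h1 := hrec n
    have h2 := fcA_rec n
    rw [ih] at h1
    have hpos : (0:ℝ) < 2*((n:ℝ)+1)*(2*n+3) := by positivity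
    apply mul_left_cancel₀ (ne_of_gt hpos)
    rw [h1, h2]

lemma fcA_conv (n : ℕ) : fcA (n+1) = fcP3 fcA n := by
  rw [← fcB_eq_fcA, fcB_succ]
  unfold fcP3
  apply Finset.sum_congr rfl
  intro p hp
  rw [fcB_eq_fcA]
  congr 1
  apply Finset.sum_congr rfl
  intro q hq
  rw [fcB_eq_fcA, fcB_eq_fcA]

lemma conv2 {f g : ℕ → ℝ} (hf : ∀ n, 0 ≤ f n) (hg : ∀ n, 0 ≤ g n) {y : ℝ} (hy : 0 ≤ y)
    (N : ℕ) :
    ∑ n ∈ Finset.range N, (∑ p ∈ Finset.HasAntidiagonal.antidiagonal n, f p.1 * g p.2) * y^n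
      ≤ (∑ n ∈ Finset.range N, f n * y^n) * (∑ n ∈ Finset.range N, g n * y^n) := by
  have key : ∀ n, (∑ p ∈ Finset.HasAntidiagonal.antidiagonal n, f p.1 * g p.2) * y^n
      = ∑ p ∈ Finset.HasAntidiagonal.antidiagonal n, (f p.1 * y^p.1) * (g p.2 * y^p.2) := by
    intro n
    rw [Finset.sum_mul]
    apply Finset.sum_congr rfl
    intro p hp
    rw [Finset.HasAntidiagonal.mem_antidiagonal] at hp
    rw [← hp, pow_add]
    ring
  simp_rw [key]
  rw [← Finset.sum_biUnion]
  · rw [Finset.sum_mul_sum]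
    rw [← Finset.sum_product']
    apply Finset.sum_le_sum_of_subset_of_nonneg
    · intro p hp
      simp only [Finset.mem_biUnion, Finset.mem_range] at hp
      obtain ⟨n, hn, hpn⟩ := hp
      rw [Finset.HasAntidiagonal.mem_antidiagonal] at hpn
      simp only [Finset.mem_product, Finset.mem_range]
      omega
    · intro p _ _
      have := hf p.1; have := hg p.2
      positivity
  · intro a _ b _ hab
    simp only [Function.onFun]
    apply Finset.disjoint_left.mpr
    intro p hpa hpb
    rw [Finset.HasAntidiagonal.mem_antidiagonal] at hpa hpb
    exact hab (hpa ▸ hpb ▸ rfl)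

lemma fcD_nonneg (m : ℕ) : 0 ≤ ∑ q ∈ Finset.HasAntidiagonal.antidiagonal m, fcA q.1 * fcA q.2 :=
  Finset.sum_nonneg fun q _ => mul_nonneg (fcA_nonneg _) (fcA_nonneg _)

lemma partial_le (N : ℕ) : ∑ n ∈ Finset.range N, fcA n * (4/27:ℝ)^n ≤ 3/2 := by
  induction N with
  | zero => norm_num
  | succ N ih =>
    set y : ℝ := (4/27:ℝ) with hy
    have hy0 : (0:ℝ) ≤ y := by norm_num
    have hS0 : (0:ℝ) ≤ ∑ n ∈ Finset.range N, fcA n * y^n :=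
      Finset.sum_nonneg fun n _ => mul_nonneg (fcA_nonneg _) (by positivity)
    rw [Finset.sum_range_succ']
    have hstep : ∀ n, fcA (n+1) * y^(n+1) = y * (fcP3 fcA n * y^n) := by
      intro n; rw [fcA_conv n, pow_succ]; ring
    simp_rw [hstep]
    rw [← Finset.mul_sum]
    have hb1 : ∑ n ∈ Finset.range N, fcP3 fcA n * y^n
        ≤ (∑ n ∈ Finset.range N, (∑ q ∈ Finset.HasAntidiagonal.antidiagonal n, fcA q.1 * fcA q.2) * y^n)
          * (∑ n ∈ Finset.range N, fcA n * y^n) := by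
      exact conv2 fcD_nonneg fcA_nonneg hy0 N
    have hb2 : ∑ n ∈ Finset.range N, (∑ q ∈ Finset.HasAntidiagonal.antidiagonal n, fcA q.1 * fcA q.2) * y^n
        ≤ (∑ n ∈ Finset.range N, fcA n * y^n) * (∑ n ∈ Finset.range N, fcA n * y^n) :=
      conv2 fcA_nonneg fcA_nonneg hy0 N
    have hP3 : ∑ n ∈ Finset.range N, fcP3 fcA n * y^n ≤ (3/2)^3 := by
      calc ∑ n ∈ Finset.range N, fcP3 fcA n * y^n
          ≤ _ * _ := hb1
        _ ≤ ((∑ n ∈ Finset.range N, fcA n * y^n) * (∑ n ∈ Finset.range N, fcA n * y^n))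
            * (∑ n ∈ Finset.range N, fcA n * y^n) := by
            apply mul_le_mul_of_nonneg_right hb2 hS0
        _ ≤ (3/2) * (3/2) * (3/2) := by
            have h32 : ∑ n ∈ Finset.range N, fcA n * y^n ≤ 3/2 := ih
            apply mul_le_mul (mul_le_mul h32 h32 hS0 (by norm_num)) h32 hS0 (by norm_num)
        _ = (3/2)^3 := by ring
    have : y * ∑ n ∈ Finset.range N, fcP3 fcA n * y^n ≤ y * (3/2)^3 :=
      mul_le_mul_of_nonneg_left hP3 hy0
    rw [fcA_zero]
    rw [hy] at this ⊢
    norm_num at this ⊢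
    linarith

lemma fcA_ratio (n : ℕ) : fcA (n+1) ≤ 27/4 * fcA n := by
  have h := fcA_rec n
  have h0 := fcA_nonneg n
  have hpos : (0:ℝ) < 2*((n:ℝ)+1)*(2*n+3) := by positivity
  rw [← mul_le_mul_iff_of_pos_left hpos]
  rw [h]
  nlinarith [h0, sq_nonneg ((n:ℝ))]

lemma fcA_le_pow (n : ℕ) : fcA n ≤ (27/4:ℝ)^n := by
  induction n with
  | zero => rw [fcA_zero]; norm_num
  | succ n ih =>
    calc fcA (n+1) ≤ 27/4 * fcA n := fcA_ratio n
      _ ≤ 27/4 * (27/4:ℝ)^n := by nlinarith [fcA_nonneg n]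
      _ = (27/4:ℝ)^(n+1) := by ring

lemma shifted_partial (N : ℕ) :
    ∑ n ∈ Finset.range N, fcA (n+1) * (4/27:ℝ)^(n+1) ≤ 1/2 := by
  have h := partial_le (N+1)
  rw [Finset.sum_range_succ'] at h
  rw [fcA_zero] at h
  norm_num at h
  linarith

lemma shifted_nonneg (n : ℕ) : 0 ≤ fcA (n+1) * (4/27:ℝ)^(n+1) :=
  mul_nonneg (fcA_nonneg _) (by positivity)

lemma shifted_summable : Summable (fun n => fcA (n+1) * (4/27:ℝ)^(n+1)) :=
  summable_of_sum_range_le shifted_nonneg shifted_partial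

lemma shifted_tsum_le : ∑' n, fcA (n+1) * (4/27:ℝ)^(n+1) ≤ 1/2 :=
  Real.tsum_le_of_sum_range_le shifted_nonneg shifted_partial

set_option maxHeartbeats 1000000 in
/-- For `c > 27/4` and `β = S(c)` we have `0 < β - 1 < 27/(8c)`;
in particular `1 < β < 3/2`. -/
theorem hypergeometric_sum_bounds (c : ℝ) (hc : c > 27 / 4) :
    let β : ℝ :=
      ∑' n : ℕ, (1 / (2 * (n : ℝ) + 1)) * (Nat.choose (3 * n) n : ℝ) * c⁻¹ ^ n
    0 < β - 1 ∧ β - 1 < 27 / (8 * c) ∧ 1 < β ∧ β < 3 / 2 := by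
  intro β
  have hc0 : (0:ℝ) < c := by linarith
  set x : ℝ := c⁻¹ with hx
  have hx0 : 0 < x := by positivity
  have hxy : x < 4/27 := by
    rw [hx]
    rw [inv_lt_iff_one_lt_mul₀ hc0]
    linarith
  have hterm : ∀ n : ℕ, (1 / (2 * (n : ℝ) + 1)) * (Nat.choose (3 * n) n : ℝ) * x ^ n
      = fcA n * x ^ n := by
    intro n
    unfold fcA
    ring
  have hβ : β = ∑' n : ℕ, fcA n * x ^ n := by
    unfold β
    exact tsum_congr hterm
  -- summability
  have hsum : Summable (fun n => fcA n * x ^ n) := by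
    apply Summable.of_nonneg_of_le
      (fun n => mul_nonneg (fcA_nonneg n) (by positivity))
      (fun n => ?_) (summable_geometric_of_lt_one (by positivity)
        (show 27/4 * x < 1 by nlinarith) )
    calc fcA n * x ^ n ≤ (27/4:ℝ)^n * x^n := by
          apply mul_le_mul_of_nonneg_right (fcA_le_pow n) (by positivity)
      _ = (27/4*x)^n := by rw [mul_pow]
  have hshift : Summable (fun n => fcA (n+1) * x ^ (n+1)) :=
    (summable_nat_add_iff 1).mpr hsum
  have hsplit : (∑' n : ℕ, fcA n * x ^ n)
      = 1 + ∑' n : ℕ, fcA (n+1) * x ^ (n+1) := by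
    rw [Summable.tsum_eq_zero_add hsum, fcA_zero]
    norm_num
  set t : ℝ := ∑' n : ℕ, fcA (n+1) * x ^ (n+1) with ht
  have htpos : 0 < t := by
    apply Summable.tsum_pos hshift (fun n => mul_nonneg (fcA_nonneg _) (by positivity)) 0
    rw [fcA_one]
    simpa using hx0
  -- upper bound
  set g : ℕ → ℝ := fun n => (27*x/4) * (fcA (n+1) * (4/27:ℝ)^(n+1)) with hg
  have hgsum : Summable g := shifted_summable.mul_left _
  have hgle : ∀ n, fcA (n+1) * x ^ (n+1) ≤ g n := by
    intro n
    show fcA (n+1) * x ^ (n+1) ≤ (27*x/4) * (fcA (n+1) * (4/27:ℝ)^(n+1))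
    have h1 : fcA (n+1) * x ^ (n+1) = x * (fcA (n+1) * x^n) := by ring
    have h2 : (27*x/4) * (fcA (n+1) * (4/27:ℝ)^(n+1)) = x * (fcA (n+1) * (4/27:ℝ)^n) := by
      rw [pow_succ]; ring
    rw [h1, h2]
    apply mul_le_mul_of_nonneg_left _ (le_of_lt hx0)
    apply mul_le_mul_of_nonneg_left _ (fcA_nonneg _)
    exact pow_le_pow_left₀ (le_of_lt hx0) (le_of_lt hxy) n
  have hglt : fcA (1+1) * x ^ (1+1) < g 1 := by
    show fcA 2 * x ^ 2 < (27*x/4) * (fcA 2 * (4/27:ℝ)^2)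
    rw [fcA_two]
    nlinarith [hx0, hxy]
  have htlt : t < ∑' n, g n :=
    Summable.tsum_lt_tsum_of_nonneg (fun n => mul_nonneg (fcA_nonneg _) (by positivity))
      hgle hglt hgsum
  have hgtsum : ∑' n, g n ≤ 27*x/8 := by
    rw [hg, tsum_mul_left]
    calc (27*x/4) * (∑' n, fcA (n+1) * (4/27:ℝ)^(n+1)) ≤ (27*x/4) * (1/2) := by
          apply mul_le_mul_of_nonneg_left shifted_tsum_le (by positivity)
      _ = 27*x/8 := by ring
  have hfinal : t < 27/(8*c) := by
    have : (27:ℝ)*x/8 = 27/(8*c) := by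
      rw [hx]; field_simp
    linarith [htlt.trans_le hgtsum]
  have hhalf : 27/(8*c) < 1/2 := by
    rw [div_lt_div_iff₀ (by positivity) (by norm_num)]
    linarith
  have hβ1 : β - 1 = t := by rw [hβ, hsplit]; ring
  refine ⟨by rw [hβ1]; exact htpos, by rw [hβ1]; exact hfinal, by nlinarith [htpos, hβ1], ?_⟩
  nlinarith [hfinal, hhalf, hβ1]
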